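/- arXiv:0909.3789 — 7 statements merged into one kernel-verified Lean document; each statement's English description precedes it below -/
import Mathlib

section
/- Let A be a square matrix over a field, partitioned as A = [[P, Q], [R, S]] with P invertible. Then the pivot A*X = [[P⁻¹, -P⁻¹Q], [RP⁻¹, S - RP⁻¹Q]] satisfies the exchange identity: A applied to (x₁, x₂) equals (y₁, y₂) if and only if A*X applied to (y₁, x₂) equals (x₁, y₂). -/
open Matrix

lemma sum_elim_eq_iff' {α β γ : Type*} {a c : α → γ} {b d : β → γ} :
    Sum.elim a b = Sum.elim c d ↔ a = c ∧ b = d := by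
  constructor
  · intro h
    constructor
    · funext i; exact congrFun h (Sum.inl i)
    · funext j; exact congrFun h (Sum.inr j)
  · rintro ⟨rfl, rfl⟩; rfl

theorem stmt0 {n m K : Type*} [Fintype n] [Fintype m] [DecidableEq n] [Field K]
    (P : Matrix n n K) (Q : Matrix n m K) (R : Matrix m n K) (S : Matrix m m K)
    (hP : IsUnit P.det) (x₁ y₁ : n → K) (x₂ y₂ : m → K) :
    (Matrix.fromBlocks P Q R S).mulVec (Sum.elim x₁ x₂) = Sum.elim y₁ y₂ ↔
      (Matrix.fromBlocks P⁻¹ (-(P⁻¹ * Q)) (R * P⁻¹) (S - R * P⁻¹ * Q)).mulVec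
          (Sum.elim y₁ x₂) = Sum.elim x₁ y₂ := by
  have hP1 := Matrix.nonsing_inv_mul P hP
  have hP2 := Matrix.mul_nonsing_inv P hP
  simp only [Matrix.fromBlocks_mulVec, sum_elim_eq_iff', Sum.elim_comp_inl,
    Sum.elim_comp_inr]
  constructor
  · rintro ⟨h1, h2⟩
    subst h1; subst h2; refine ⟨?_, ?_⟩ <;>
      simp [Matrix.mulVec_add, Matrix.sub_mulVec, Matrix.neg_mulVec, Matrix.mulVec_neg,
        Matrix.mulVec_mulVec, ← Matrix.mul_assoc, hP1, hP2, Matrix.one_mulVec,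
        Matrix.mul_nonsing_inv_cancel_right _ _ hP, Matrix.mul_nonsing_inv_cancel_left _ _ hP,
        Matrix.nonsing_inv_mul_cancel_right _ _ hP, Matrix.nonsing_inv_mul_cancel_left _ _ hP] <;>
      try abel
  · rintro ⟨h1, h2⟩
    subst h1; subst h2; refine ⟨?_, ?_⟩ <;>
      simp [Matrix.mulVec_add, Matrix.sub_mulVec, Matrix.neg_mulVec, Matrix.mulVec_neg,
        Matrix.mulVec_mulVec, ← Matrix.mul_assoc, hP1, hP2, Matrix.one_mulVec,
        Matrix.mul_nonsing_inv_cancel_right _ _ hP, Matrix.mul_nonsing_inv_cancel_left _ _ hP,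
        Matrix.nonsing_inv_mul_cancel_right _ _ hP, Matrix.nonsing_inv_mul_cancel_left _ _ hP] <;>
      try abel
end

section
/- (Tucker's determinant formula over F2, diagonal case) Let A be a symmetric V×V matrix over F2 and X ⊆ V with det A[X] ≠ 0. Then for every Y ⊆ V, det((A*X)[Y]) = det(A[X Δ Y]) / det(A[X]) = det(A[X Δ Y]), where Δ denotes symmetric difference and A[Z] denotes the principal submatrix of A indexed by Z. -/
open Matrix

variable {V : Type*} [Fintype V] [DecidableEq V] {K : Type*} [Field K]

/-- Principal submatrix of `A` on index set `X`. -/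
def psub (A : Matrix V V K) (X : Finset V) :
    Matrix {v // v ∈ X} {v // v ∈ X} K :=
  A.submatrix Subtype.val Subtype.val

/-- Principal pivot transform of `A` on index set `X`. -/
noncomputable def pivot (A : Matrix V V K) (X : Finset V) : Matrix V V K :=
  let P : Matrix {v // v ∈ X} {v // v ∈ X} K := A.submatrix Subtype.val Subtype.val
  let Q : Matrix {v // v ∈ X} {v // v ∉ X} K := A.submatrix Subtype.val Subtype.val
  let R : Matrix {v // v ∉ X} {v // v ∈ X} K := A.submatrix Subtype.val Subtype.val
  let S : Matrix {v // v ∉ X} {v // v ∉ X} K := A.submatrix Subtype.val Subtype.val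
  (Matrix.fromBlocks P⁻¹ (-(P⁻¹ * Q)) (R * P⁻¹) (S - R * P⁻¹ * Q)).submatrix
    (Equiv.sumCompl (· ∈ X)).symm (Equiv.sumCompl (· ∈ X)).symm

set_option linter.unusedSectionVars false

/-- The matrix whose rows in `Z` are those of `M`, and identity rows elsewhere. -/
def rowMix (M : Matrix V V K) (Z : Finset V) : Matrix V V K :=
  fun i j => if i ∈ Z then M i j else (1 : Matrix V V K) i j

/-- Off-diagonal block `Q`. -/
def offQ (A : Matrix V V K) (X : Finset V) : Matrix {v // v ∈ X} {v // v ∉ X} K :=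
  A.submatrix Subtype.val Subtype.val

/-- Off-diagonal block `R`. -/
def offR (A : Matrix V V K) (X : Finset V) : Matrix {v // v ∉ X} {v // v ∈ X} K :=
  A.submatrix Subtype.val Subtype.val

/-- Diagonal block `S`. -/
def offS (A : Matrix V V K) (X : Finset V) : Matrix {v // v ∉ X} {v // v ∉ X} K :=
  A.submatrix Subtype.val Subtype.val

lemma rowMix_submatrix (M : Matrix V V K) (Z : Finset V) :
    (rowMix M Z).submatrix (Equiv.sumCompl (· ∈ Z)) (Equiv.sumCompl (· ∈ Z)) =
      fromBlocks (psub M Z) (offQ M Z) 0 1 := by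
  ext i j
  cases i with
  | inl i =>
    cases j with
    | inl j => simp [rowMix, psub, fromBlocks, i.2]
    | inr j => simp [rowMix, offQ, fromBlocks, i.2]
  | inr i =>
    cases j with
    | inl j =>
      have : i.1 ≠ j.1 := fun h => i.2 (h ▸ j.2)
      simp [rowMix, fromBlocks, i.2, Matrix.one_apply, this]
    | inr j =>
      simp [rowMix, fromBlocks, i.2, Matrix.one_apply, Subtype.ext_iff]
      congr

lemma rowMix_compl_submatrix (M : Matrix V V K) (Z : Finset V) :
    (rowMix M Zᶜ).submatrix (Equiv.sumCompl (· ∈ Z)) (Equiv.sumCompl (· ∈ Z)) =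
      fromBlocks 1 0 (offR M Z) (offS M Z) := by
  ext i j
  cases i with
  | inl i =>
    have hi : i.1 ∉ (Zᶜ : Finset V) := by simp [i.2]
    cases j with
    | inl j =>
      show rowMix M Zᶜ i.1 j.1 = (1 : Matrix {v // v ∈ Z} {v // v ∈ Z} K) i j
      dsimp only [rowMix]
      rw [if_neg hi, Matrix.one_apply, Matrix.one_apply]
      exact if_congr Subtype.ext_iff.symm rfl rfl
    | inr j =>
      have : i.1 ≠ j.1 := fun h => j.2 (h ▸ i.2)
      simp [rowMix, fromBlocks, hi, Matrix.one_apply, this]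
  | inr i =>
    have hi : i.1 ∈ (Zᶜ : Finset V) := by simp [i.2]
    cases j with
    | inl j => simp [rowMix, offR, fromBlocks, hi]
    | inr j => simp [rowMix, offS, fromBlocks, hi]

lemma det_rowMix (M : Matrix V V K) (Z : Finset V) :
    (rowMix M Z).det = (psub M Z).det := by
  rw [← Matrix.det_submatrix_equiv_self (Equiv.sumCompl (· ∈ Z)) (rowMix M Z),
    rowMix_submatrix, Matrix.det_fromBlocks_zero₂₁, Matrix.det_one, mul_one]

lemma pivot_mul_rowMix (A : Matrix V V K) (X : Finset V) (hX : (psub A X).det ≠ 0) :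
    pivot A X * rowMix A X = rowMix A Xᶜ := by
  have e := Equiv.sumCompl (· ∈ X)
  have hPu : IsUnit (psub A X).det := isUnit_iff_ne_zero.mpr hX
  have hPinv : (psub A X)⁻¹ * psub A X = 1 := Matrix.nonsing_inv_mul _ hPu
  have hpivot : pivot A X =
      (fromBlocks (psub A X)⁻¹ (-((psub A X)⁻¹ * offQ A X)) (offR A X * (psub A X)⁻¹)
        (offS A X - offR A X * (psub A X)⁻¹ * offQ A X)).submatrix
        (Equiv.sumCompl (· ∈ X)).symm (Equiv.sumCompl (· ∈ X)).symm := rfl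
  have h1 : rowMix A X = (fromBlocks (psub A X) (offQ A X) 0 1).submatrix
      (Equiv.sumCompl (· ∈ X)).symm (Equiv.sumCompl (· ∈ X)).symm := by
    rw [← rowMix_submatrix A X]
    ext i j
    simp
  have h2 : rowMix A Xᶜ = (fromBlocks 1 0 (offR A X) (offS A X)).submatrix
      (Equiv.sumCompl (· ∈ X)).symm (Equiv.sumCompl (· ∈ X)).symm := by
    rw [← rowMix_compl_submatrix A X]
    ext i j
    simp
  rw [hpivot, h1, h2, Matrix.submatrix_mul_equiv]
  simp only [Matrix.fromBlocks_multiply, Matrix.mul_zero, Matrix.mul_one, add_zero,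
    Matrix.mul_assoc, hPinv, neg_mul, add_neg_cancel, add_sub_cancel, Matrix.mul_one]

lemma rowMix_mul_apply (M C : Matrix V V K) (Z : Finset V) (i j : V) :
    (rowMix M Z * C) i j = if i ∈ Z then (M * C) i j else C i j := by
  by_cases hi : i ∈ Z
  · simp [Matrix.mul_apply, rowMix, hi]
  · rw [if_neg hi, Matrix.mul_apply]
    have h1 : ∀ k, rowMix M Z i k = (1 : Matrix V V K) i k := fun k => if_neg hi
    calc ∑ k, rowMix M Z i k * C k j = ∑ k, (1 : Matrix V V K) i k * C k j := by
          simp_rw [h1]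
      _ = ((1 : Matrix V V K) * C) i j := (Matrix.mul_apply).symm
      _ = C i j := by rw [Matrix.one_mul]

theorem stmt3 (A : Matrix V V (ZMod 2)) (hA : A.IsSymm) (X : Finset V)
    (hX : (psub A X).det ≠ 0) (Y : Finset V) :
    (psub (pivot A X) Y).det = (psub A (symmDiff X Y)).det := by
  have key : rowMix (pivot A X) Y * rowMix A X = rowMix A (symmDiff X Y) := by
    ext i j
    rw [rowMix_mul_apply]
    by_cases hiY : i ∈ Y
    · rw [if_pos hiY, pivot_mul_rowMix A X hX]
      by_cases hiX : i ∈ X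
      · have h1 : i ∉ (Xᶜ : Finset V) := by simp [hiX]
        have h2 : i ∉ symmDiff X Y := by simp [Finset.mem_symmDiff, hiX, hiY]
        simp [rowMix, h1, h2]
      · have h1 : i ∈ (Xᶜ : Finset V) := by simp [hiX]
        have h2 : i ∈ symmDiff X Y := by simp [Finset.mem_symmDiff, hiX, hiY]
        simp [rowMix, h1, h2]
    · rw [if_neg hiY]
      by_cases hiX : i ∈ X
      · have h2 : i ∈ symmDiff X Y := by simp [Finset.mem_symmDiff, hiX, hiY]
        simp [rowMix, hiX, h2]
      · have h2 : i ∉ symmDiff X Y := by simp [Finset.mem_symmDiff, hiX, hiY]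
        simp [rowMix, hiX, h2]
  have hdet1 : (psub A X).det = 1 := by
    have : ∀ x : ZMod 2, x ≠ 0 → x = 1 := by decide
    exact this _ hX
  calc (psub (pivot A X) Y).det = (rowMix (pivot A X) Y).det := (det_rowMix _ _).symm
    _ = (rowMix (pivot A X) Y).det * (rowMix A X).det := by
        rw [det_rowMix A X, hdet1, mul_one]
    _ = (rowMix (pivot A X) Y * rowMix A X).det := (Matrix.det_mul _ _).symm
    _ = (rowMix A (symmDiff X Y)).det := by rw [key]
    _ = (psub A (symmDiff X Y)).det := det_rowMix _ _
end

section
/- Let A be a square matrix over a field and X a set of indices such that both A*X and (A*X)*Y are defined (i.e., the relevant principal submatrices are invertible). Then A*(X Δ Y) is defined and (A*X)*Y = A*(X Δ Y), where Δ is symmetric difference. -/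
open Matrix

variable {V : Type*} [Fintype V] [DecidableEq V] {K : Type*} [Field K]

namespace PivotAux

/-- swap the `X`-coordinates: take `w` on `X` and `z` off `X`. -/
def sw (X : Finset V) (z w : V → K) : V → K := fun i => if i ∈ X then w i else z i

/-- the coordinate-swap of the graph map of `A`. -/
noncomputable def phi (A : Matrix V V K) (X : Finset V) : (V → K) →ₗ[K] (V → K) where
  toFun z := sw X z (A *ᵥ z)
  map_add' z₁ z₂ := by
    funext i
    simp only [sw, Matrix.mulVec_add, Pi.add_apply]
    split <;> simp
  map_smul' c z := by
    funext i
    simp only [sw, Matrix.mulVec_smul, Pi.smul_apply, RingHom.id_apply]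
    split <;> simp

lemma phi_apply (A : Matrix V V K) (X : Finset V) (z : V → K) :
    phi A X z = sw X z (A *ᵥ z) := rfl

lemma sw_sw (X Y : Finset V) (z w : V → K) :
    sw Y (sw X z w) (sw X w z) = sw (symmDiff X Y) z w := by
  funext i
  simp only [sw, Finset.mem_symmDiff]
  by_cases hX : i ∈ X <;> by_cases hY : i ∈ Y <;> simp [hX, hY]

lemma psub_mulVec (A : Matrix V V K) (X : Finset V) (z : V → K)
    (hz : ∀ i ∉ X, z i = 0) (i : {v // v ∈ X}) :
    (psub A X *ᵥ (z ∘ Subtype.val)) i = (A *ᵥ z) i.val := by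
  simp only [psub, mulVec, dotProduct, submatrix_apply, Function.comp_apply]
  rw [← Finset.sum_subtype X (fun j => Iff.rfl) (fun j => A i.val j * z j)]
  refine Finset.sum_subset (Finset.subset_univ X) (fun x _ hx => ?_)
  simp [hz x hx]

lemma det_ne_iff (A : Matrix V V K) (X : Finset V) :
    (psub A X).det ≠ 0 ↔ ∀ z : V → K, phi A X z = 0 → z = 0 := by
  constructor
  · intro hdet z hz
    have hz' : ∀ i, (if i ∈ X then (A *ᵥ z) i else z i) = 0 := fun i => congrFun hz i
    have hzoff : ∀ i ∉ X, z i = 0 := by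
      intro i hi; have := hz' i; simpa [hi] using this
    have hv : psub A X *ᵥ (z ∘ Subtype.val) = 0 := by
      funext i
      rw [psub_mulVec A X z hzoff]
      have := hz' i.val; simpa [i.property] using this
    have hz0 : z ∘ Subtype.val = (0 : {v // v ∈ X} → K) := by
      by_contra hne
      exact hdet (exists_mulVec_eq_zero_iff.mp ⟨_, hne, hv⟩)
    funext i
    by_cases hi : i ∈ X
    · exact congrFun hz0 ⟨i, hi⟩
    · exact hzoff i hi
  · intro h hdet
    obtain ⟨v, hvne, hv0⟩ := exists_mulVec_eq_zero_iff.mpr hdet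
    set z : V → K := fun i => if h : i ∈ X then v ⟨i, h⟩ else 0 with hzdef
    have hzoff : ∀ i ∉ X, z i = 0 := fun i hi => by simp [hzdef, hi]
    have hzv : z ∘ Subtype.val = v := by
      funext j; simp [hzdef, j.property]
    have hphi : phi A X z = 0 := by
      funext i
      show (if i ∈ X then (A *ᵥ z) i else z i) = 0
      by_cases hi : i ∈ X
      · rw [if_pos hi, ← psub_mulVec A X z hzoff ⟨i, hi⟩, hzv, hv0]; rfl
      · rw [if_neg hi]; exact hzoff i hi
    have := h z hphi
    apply hvne
    rw [← hzv, this]; rfl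

lemma pivot_mulVec (A : Matrix V V K) (X : Finset V) (hX : (psub A X).det ≠ 0) (z : V → K) :
    pivot A X *ᵥ sw X z (A *ᵥ z) = sw X (A *ᵥ z) z := by
  set w := A *ᵥ z with hw
  set P : Matrix {v // v ∈ X} {v // v ∈ X} K := A.submatrix Subtype.val Subtype.val with hP
  set Q : Matrix {v // v ∈ X} {v // v ∉ X} K := A.submatrix Subtype.val Subtype.val with hQ
  set R : Matrix {v // v ∉ X} {v // v ∈ X} K := A.submatrix Subtype.val Subtype.val with hR
  set S : Matrix {v // v ∉ X} {v // v ∉ X} K := A.submatrix Subtype.val Subtype.val with hS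
  set e : _ ≃ V := Equiv.sumCompl (· ∈ X) with he
  have hPinv : P⁻¹ * P = 1 :=
    Matrix.nonsing_inv_mul P (isUnit_iff_ne_zero.mpr hX)
  set z₁ : {v // v ∈ X} → K := z ∘ Subtype.val with hz₁
  set z₂ : {v // v ∉ X} → K := z ∘ Subtype.val with hz₂
  set w₁ : {v // v ∈ X} → K := w ∘ Subtype.val with hw₁
  set w₂ : {v // v ∉ X} → K := w ∘ Subtype.val with hw₂
  -- A as a block matrix
  have hAeq : A = (fromBlocks P Q R S).submatrix e.symm e.symm := by
    have h1 : fromBlocks P Q R S = A.submatrix e e := by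
      ext (i | i) (j | j) <;> rfl
    rw [h1, submatrix_submatrix, Equiv.self_comp_symm, submatrix_id_id]
  have hze : z ∘ e = Sum.elim z₁ z₂ := by funext i; cases i <;> rfl
  have hwe : w ∘ e = Sum.elim w₁ w₂ := by funext i; cases i <;> rfl
  have hAz : fromBlocks P Q R S *ᵥ (z ∘ ⇑e) = w ∘ ⇑e := by
    rw [hw, hAeq, submatrix_mulVec_equiv, Equiv.symm_symm]
    funext i
    simp
  have hblocks : Sum.elim w₁ w₂ = Sum.elim (P *ᵥ z₁ + Q *ᵥ z₂) (R *ᵥ z₁ + S *ᵥ z₂) := by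
    rw [← hwe, ← hAz, hze, fromBlocks_mulVec, Sum.elim_comp_inl, Sum.elim_comp_inr]
  have hw1 : w₁ = P *ᵥ z₁ + Q *ᵥ z₂ := by
    have := congrArg (fun f => f ∘ Sum.inl) hblocks; simpa using this
  have hw2 : w₂ = R *ᵥ z₁ + S *ᵥ z₂ := by
    have := congrArg (fun f => f ∘ Sum.inr) hblocks; simpa using this
  have hswe1 : sw X z w ∘ e = Sum.elim w₁ z₂ := by
    funext i; rcases i with i | i
    · show (if (e (Sum.inl i) : V) ∈ X then w _ else z _) = w i.val
      rw [if_pos]; · rfl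
      · show (e (Sum.inl i) : V) ∈ X
        simp [he]
    · show (if (e (Sum.inr i) : V) ∈ X then w _ else z _) = z i.val
      rw [if_neg]; · rfl
      · show ¬ (e (Sum.inr i) : V) ∈ X
        simpa [he] using i.property
  have hswe2 : sw X w z ∘ e = Sum.elim z₁ w₂ := by
    funext i; rcases i with i | i
    · show (if (e (Sum.inl i) : V) ∈ X then z _ else w _) = z i.val
      rw [if_pos]; · rfl
      · show (e (Sum.inl i) : V) ∈ X
        simp [he]
    · show (if (e (Sum.inr i) : V) ∈ X then z _ else w _) = w i.val
      rw [if_neg]; · rfl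
      · show ¬ (e (Sum.inr i) : V) ∈ X
        simpa [he] using i.property
  have hpiv : pivot A X =
      (fromBlocks P⁻¹ (-(P⁻¹ * Q)) (R * P⁻¹) (S - R * P⁻¹ * Q)).submatrix e.symm e.symm := rfl
  -- the block computation
  have hkey : fromBlocks P⁻¹ (-(P⁻¹ * Q)) (R * P⁻¹) (S - R * P⁻¹ * Q) *ᵥ Sum.elim w₁ z₂
      = Sum.elim z₁ w₂ := by
    rw [fromBlocks_mulVec, Sum.elim_comp_inl, Sum.elim_comp_inr, hw1, hw2]
    have h1 : P⁻¹ *ᵥ (P *ᵥ z₁ + Q *ᵥ z₂) + -(P⁻¹ * Q) *ᵥ z₂ = z₁ := by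
      rw [Matrix.mulVec_add, Matrix.neg_mulVec, Matrix.mulVec_mulVec z₁ P⁻¹ P, hPinv,
        Matrix.one_mulVec, Matrix.mulVec_mulVec z₂ P⁻¹ Q, add_assoc, add_neg_cancel, add_zero]
    have h2 : (R * P⁻¹) *ᵥ (P *ᵥ z₁ + Q *ᵥ z₂) + (S - R * P⁻¹ * Q) *ᵥ z₂
        = R *ᵥ z₁ + S *ᵥ z₂ := by
      rw [Matrix.mulVec_add, Matrix.sub_mulVec, Matrix.mulVec_mulVec z₁ (R * P⁻¹) P,
        Matrix.mul_assoc, hPinv, Matrix.mul_one, Matrix.mulVec_mulVec z₂ (R * P⁻¹) Q]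
      abel
    rw [h1, h2]
  -- conclude
  funext i
  have : (pivot A X *ᵥ sw X z w) (e (e.symm i)) = sw X w z (e (e.symm i)) := by
    rw [hpiv, submatrix_mulVec_equiv]
    show ((fromBlocks P⁻¹ (-(P⁻¹ * Q)) (R * P⁻¹) (S - R * P⁻¹ * Q) *ᵥ
      (sw X z w ∘ e.symm.symm)) ∘ e.symm) (e (e.symm i)) = _
    rw [Function.comp_apply, Equiv.symm_apply_apply]
    have he2 : sw X z w ∘ e.symm.symm = sw X z w ∘ e := rfl
    rw [he2, hswe1, hkey, ← hswe2]
    rfl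
  simpa using this

lemma phi_surjective (A : Matrix V V K) (X : Finset V) (hX : (psub A X).det ≠ 0) :
    Function.Surjective (phi A X) := by
  have hinj : Function.Injective (phi A X) := by
    rw [injective_iff_map_eq_zero]
    exact (det_ne_iff A X).mp hX
  exact (LinearMap.injective_iff_surjective).mp hinj

end PivotAux

open PivotAux in
theorem stmt4 (A : Matrix V V K) (X Y : Finset V)
    (hX : (psub A X).det ≠ 0) (hY : (psub (pivot A X) Y).det ≠ 0) :
    (psub A (symmDiff X Y)).det ≠ 0 ∧ pivot (pivot A X) Y = pivot A (symmDiff X Y) := by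
  -- transport the kernel conditions
  have hXk := (det_ne_iff A X).mp hX
  have hYk := (det_ne_iff (pivot A X) Y).mp hY
  have key : ∀ z : V → K, phi (pivot A X) Y (phi A X z) = phi A (symmDiff X Y) z := by
    intro z
    rw [phi_apply, phi_apply, phi_apply, pivot_mulVec A X hX z, sw_sw]
  have hXYdet : (psub A (symmDiff X Y)).det ≠ 0 := by
    rw [det_ne_iff]
    intro z hz
    rw [← key] at hz
    exact hXk z (hYk _ hz)
  refine ⟨hXYdet, ?_⟩
  have hsurj := phi_surjective A (symmDiff X Y) hXYdet
  -- both matrices act identically on all vectors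
  have hvec : ∀ v : V → K, pivot (pivot A X) Y *ᵥ v = pivot A (symmDiff X Y) *ᵥ v := by
    intro v
    obtain ⟨z, hz⟩ := hsurj v
    set w := A *ᵥ z with hw
    have h1 : pivot A (symmDiff X Y) *ᵥ v = sw (symmDiff X Y) w z := by
      rw [← hz, phi_apply]; exact pivot_mulVec A (symmDiff X Y) hXYdet z
    have h2 : pivot A X *ᵥ sw X z w = sw X w z := pivot_mulVec A X hX z
    have h3 : v = sw Y (sw X z w) (sw X w z) := by rw [sw_sw, ← phi_apply, hz]
    have h4 : pivot (pivot A X) Y *ᵥ v = sw Y (sw X w z) (sw X z w) := by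
      rw [h3, ← h2]
      have := pivot_mulVec (pivot A X) Y hY (sw X z w)
      rw [h2] at this ⊢
      exact this
    rw [h1, h4, sw_sw]
  ext i j
  have h := hvec (Pi.single j 1)
  have := congrFun h i
  simpa using this
end

section
/- If A is a symmetric matrix over F2 and A*X is defined, then A*X is symmetric. -/
open Matrix

variable {V : Type*} [Fintype V] [DecidableEq V] {K : Type*} [Field K]

/-- In characteristic two, negation of a matrix is the identity. -/
lemma neg_matrix_zmod_two {m n : Type*} (M : Matrix m n (ZMod 2)) : -M = M := by
  ext i j; exact CharTwo.neg_eq _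

theorem stmt5 (A : Matrix V V (ZMod 2)) (hA : A.IsSymm) (X : Finset V)
    (hX : (psub A X).det ≠ 0) : (pivot A X).IsSymm := by
  simp only [Matrix.IsSymm, pivot, Matrix.transpose_submatrix,
    Matrix.fromBlocks_transpose, Matrix.transpose_nonsing_inv, Matrix.transpose_neg,
    Matrix.transpose_mul, Matrix.transpose_sub, hA.eq, neg_matrix_zmod_two,
    Matrix.mul_assoc]
end

section
/- Let A be a V×V matrix over a field and X ⊆ V with A[X] invertible. Then the eigenspace of A for eigenvalue 1 equals the eigenspace of A*X for eigenvalue 1: E₁(A) = E₁(A*X). -/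
open Matrix

variable {V : Type*} [Fintype V] [DecidableEq V] {K : Type*} [Field K]

/-- Key block computation: fixed points of a block matrix correspond to fixed points
of its principal pivot transform. -/
lemma key_pivot_fixed {α β K : Type*} [Fintype α] [Fintype β] [DecidableEq α] [Field K]
    (P : Matrix α α K) (Q : Matrix α β K) (R : Matrix β α K) (S : Matrix β β K)
    (hP : IsUnit P.det) (a : α → K) (b : β → K) :
    (P *ᵥ a + Q *ᵥ b = a ∧ R *ᵥ a + S *ᵥ b = b) ↔
    (P⁻¹ *ᵥ a + (-(P⁻¹ * Q)) *ᵥ b = a ∧ (R * P⁻¹) *ᵥ a + (S - R * P⁻¹ * Q) *ᵥ b = b) := by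
  have h1 : (P *ᵥ a + Q *ᵥ b = a) ↔ (P⁻¹ *ᵥ a + (-(P⁻¹ * Q)) *ᵥ b = a) := by
    constructor
    · intro h
      have h' := congrArg (P⁻¹ *ᵥ ·) h
      simp only [Matrix.mulVec_add, Matrix.mulVec_mulVec, Matrix.nonsing_inv_mul P hP,
        Matrix.one_mulVec] at h'
      rw [Matrix.neg_mulVec]
      linear_combination (norm := abel) - h'
    · intro h
      have h' := congrArg (P *ᵥ ·) h
      rw [Matrix.neg_mulVec] at h'
      simp only [Matrix.mulVec_add, Matrix.mulVec_neg, Matrix.mulVec_mulVec,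
        ← Matrix.mul_assoc, Matrix.mul_nonsing_inv P hP, Matrix.one_mul,
        Matrix.one_mulVec] at h'
      linear_combination (norm := abel) - h'
  have key2 : ∀ (_ : P⁻¹ *ᵥ a + (-(P⁻¹ * Q)) *ᵥ b = a),
      R *ᵥ a = (R * P⁻¹) *ᵥ a - (R * P⁻¹ * Q) *ᵥ b := by
    intro h
    conv_lhs => rw [← h]
    rw [Matrix.neg_mulVec]
    simp only [Matrix.mulVec_add, Matrix.mulVec_neg, Matrix.mulVec_mulVec,
      ← Matrix.mul_assoc]
    abel
  constructor
  · rintro ⟨ha, hb⟩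
    have ha' := h1.mp ha
    refine ⟨ha', ?_⟩
    rw [Matrix.sub_mulVec]
    have e : (R * P⁻¹) *ᵥ a + (S *ᵥ b - (R * P⁻¹ * Q) *ᵥ b) = R *ᵥ a + S *ᵥ b := by
      rw [key2 ha']; abel
    rw [e, hb]
  · rintro ⟨ha, hb⟩
    refine ⟨h1.mpr ha, ?_⟩
    rw [Matrix.sub_mulVec] at hb
    have e : (R * P⁻¹) *ᵥ a + (S *ᵥ b - (R * P⁻¹ * Q) *ᵥ b) = R *ᵥ a + S *ᵥ b := by
      rw [key2 ha]; abel
    rw [← e, hb]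

theorem stmt6 (A : Matrix V V K) (X : Finset V) (hX : IsUnit (psub A X).det) :
    {v : V → K | A.mulVec v = v} = {v : V → K | (pivot A X).mulVec v = v} := by
  classical
  set e : {v // v ∈ X} ⊕ {v // v ∉ X} ≃ V := Equiv.sumCompl (· ∈ X) with he
  set P : Matrix {v // v ∈ X} {v // v ∈ X} K := A.submatrix Subtype.val Subtype.val with hP
  set Q : Matrix {v // v ∈ X} {v // v ∉ X} K := A.submatrix Subtype.val Subtype.val with hQ
  set R : Matrix {v // v ∉ X} {v // v ∈ X} K := A.submatrix Subtype.val Subtype.val with hR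
  set S : Matrix {v // v ∉ X} {v // v ∉ X} K := A.submatrix Subtype.val Subtype.val with hS
  have hAblocks : A.submatrix e e = Matrix.fromBlocks P Q R S := by
    ext i j
    cases i <;> cases j <;> rfl
  ext v
  simp only [Set.mem_setOf_eq]
  have hmv : ∀ (M : Matrix V V K), M *ᵥ v = v ↔ (M.submatrix e e) *ᵥ (v ∘ e) = v ∘ e := by
    intro M
    rw [Matrix.submatrix_mulVec_equiv]
    have hv : (v ∘ ⇑e) ∘ ⇑e.symm = v := by
      rw [Function.comp_assoc, Equiv.self_comp_symm, Function.comp_id]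
    rw [hv]
    constructor
    · intro h; rw [h]
    · intro h
      funext x
      have := congrFun h (e.symm x)
      simpa using this
  rw [hmv A, hmv (pivot A X), hAblocks]
  have hpiv : (pivot A X).submatrix e e =
      Matrix.fromBlocks P⁻¹ (-(P⁻¹ * Q)) (R * P⁻¹) (S - R * P⁻¹ * Q) := by
    unfold pivot
    rw [Matrix.submatrix_submatrix]
    simp [he, Equiv.symm_comp_self]
    exact ⟨rfl, rfl, rfl, rfl⟩
  rw [hpiv]
  have hsplit : v ∘ e = Sum.elim (v ∘ e ∘ Sum.inl) (v ∘ e ∘ Sum.inr) := by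
    ext i; cases i <;> rfl
  rw [hsplit, Matrix.fromBlocks_mulVec, Matrix.fromBlocks_mulVec]
  rw [Sum.elim_eq_iff, Sum.elim_eq_iff]
  exact key_pivot_fixed P Q R S hX _ _
end

section
/- (Invariance of maximal pivots under dual pivot) Let G be a symmetric V×V matrix over F2 and X ⊆ V with det((G+I)[X]) = 1. Then the family of maximal elements of {Y ⊆ V : det G[Y] = 1} equals the family of maximal elements of {Y ⊆ V : det (G ∗̄ X)[Y] = 1}, where G ∗̄ X = ((G+I)*X) + I is the dual pivot. -/
open Matrix
open scoped symmDiff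
set_option linter.unusedSectionVars false
set_option maxHeartbeats 1000000

variable {V : Type*} [Fintype V] [DecidableEq V] {K : Type*} [Field K]

/-- Dual pivot of `G` on `X`: pivot conjugated by adding the identity. -/
noncomputable def dualPivot (G : Matrix V V (ZMod 2)) (X : Finset V) : Matrix V V (ZMod 2) :=
  pivot (G + 1) X + 1

def Tm (A : Matrix V V K) (S : Finset V) : Matrix V V K :=
  fun v w => if v ∈ S then A v w else (1 : Matrix V V K) v w

lemma Tm_eq_submatrix (A : Matrix V V K) (S : Finset V) :
    Tm A S = (fromBlocks (psub A S) (A.submatrix Subtype.val Subtype.val) 0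
        (1 : Matrix {v // v ∉ S} {v // v ∉ S} K)).submatrix
      (Equiv.sumCompl (· ∈ S)).symm (Equiv.sumCompl (· ∈ S)).symm := by
  ext v w
  by_cases hv : v ∈ S <;> by_cases hw : w ∈ S <;>
    simp [Tm, psub, Equiv.sumCompl, hv, hw, one_apply, Subtype.ext_iff]
  rintro rfl; exact hv hw

lemma det_Tm (A : Matrix V V K) (S : Finset V) : (Tm A S).det = (psub A S).det := by
  rw [Tm_eq_submatrix, det_submatrix_equiv_self, det_fromBlocks_zero₂₁, det_one, mul_one]

lemma Tm_compl_eq_submatrix (A : Matrix V V K) (X : Finset V) :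
    Tm A Xᶜ = (fromBlocks (1 : Matrix {v // v ∈ X} {v // v ∈ X} K)
        0 (A.submatrix Subtype.val Subtype.val)
        (A.submatrix Subtype.val Subtype.val : Matrix {v // v ∉ X} {v // v ∉ X} K)).submatrix
      (Equiv.sumCompl (· ∈ X)).symm (Equiv.sumCompl (· ∈ X)).symm := by
  ext v w
  by_cases hv : v ∈ X <;> by_cases hw : w ∈ X <;>
    simp [Tm, Equiv.sumCompl, hv, hw, one_apply, Subtype.ext_iff]
  rintro rfl; exact hw hv

lemma pivot_mul_Tm (A : Matrix V V K) (X : Finset V) (hX : IsUnit (psub A X).det) :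
    pivot A X * Tm A X = Tm A Xᶜ := by
  have hP : (psub A X)⁻¹ * psub A X = 1 := nonsing_inv_mul _ hX
  simp only [psub] at hP
  rw [Tm_eq_submatrix, Tm_compl_eq_submatrix, pivot, Matrix.submatrix_mul_equiv]
  rw [fromBlocks_multiply]
  simp only [psub, Matrix.mul_zero, Matrix.mul_one, add_zero, Matrix.mul_assoc, hP,
    neg_mul, add_neg_cancel, Matrix.mul_one]
  rw [show ∀ a b : Matrix {v // v ∉ X} {v // v ∉ X} K, a + (b - a) = b from
    fun a b => by abel]

lemma Tm_pivot_mul_Tm (A : Matrix V V K) (X Y : Finset V) (hX : IsUnit (psub A X).det) :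
    Tm (pivot A X) Y * Tm A X = Tm A (X ∆ Y) := by
  ext v w
  rw [Matrix.mul_apply]
  by_cases hv : v ∈ Y
  · have h1 := congrFun (congrFun (pivot_mul_Tm A X hX) v) w
    rw [Matrix.mul_apply] at h1
    have h2 : ∀ k, Tm (pivot A X) Y v k * Tm A X k w = pivot A X v k * Tm A X k w := by
      intro k; rw [Tm, if_pos hv]
    rw [Finset.sum_congr rfl (fun k _ => h2 k), h1]
    by_cases hx : v ∈ X <;>
      simp [Tm, Finset.mem_symmDiff, hx, hv]
  · have h1 := congrFun (congrFun (Matrix.one_mul (Tm A X)) v) w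
    rw [Matrix.mul_apply] at h1
    have h2 : ∀ k, Tm (pivot A X) Y v k * Tm A X k w = (1 : Matrix V V K) v k * Tm A X k w := by
      intro k; rw [Tm, if_neg hv]
    rw [Finset.sum_congr rfl (fun k _ => h2 k), h1]
    by_cases hx : v ∈ X <;>
      simp [Tm, Finset.mem_symmDiff, hx, hv]

lemma tucker (A : Matrix V V K) (X Y : Finset V) (hX : (psub A X).det = 1) :
    (psub (pivot A X) Y).det = (psub A (X ∆ Y)).det := by
  have hU : IsUnit (psub A X).det := by rw [hX]; exact isUnit_one
  have h := congrArg Matrix.det (Tm_pivot_mul_Tm A X Y hU)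
  rw [Matrix.det_mul, det_Tm, det_Tm, det_Tm, hX, mul_one] at h
  exact h

lemma psub_add_one (M : Matrix V V K) (Z : Finset V) :
    psub (M + 1) Z = psub M Z + 1 := by
  ext v w
  by_cases h : v = w <;>
    simp [psub, Matrix.add_apply, one_apply, Subtype.ext_iff, h]

lemma det_add_one (N : Matrix V V K) :
    (N + 1).det = ∑ s : Finset V, (psub N s).det := by
  have h := MultilinearMap.map_add_univ
      (Matrix.detRowAlternating : (V → K) [⋀^V]→ₗ[K] K).toMultilinearMap N (1 : Matrix V V K)
  rw [AlternatingMap.coe_multilinearMap] at h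
  rw [show (N + 1).det = ∑ s : Finset V, Matrix.det (s.piecewise N (1 : Matrix V V K)) from h]
  refine Finset.sum_congr rfl fun s _ => ?_
  have hs : s.piecewise N (1 : Matrix V V K) = Tm N s := by
    ext i j
    by_cases hi : i ∈ s
    · simp [Finset.piecewise, Tm, hi]
    · simp [Finset.piecewise, Tm, hi]
  rw [hs, det_Tm]

def subEquiv (Z : Finset V) (s : Finset {v // v ∈ Z}) :
    {u : {v // v ∈ Z} // u ∈ s} ≃
      {u // u ∈ s.map (Function.Embedding.subtype (· ∈ Z))} :=
  { toFun := fun u => ⟨u.1.1, Finset.mem_map.mpr ⟨u.1, u.2, rfl⟩⟩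
    invFun := fun u =>
      ⟨⟨u.1, by obtain ⟨a, _, h⟩ := Finset.mem_map.mp u.2; exact h ▸ a.2⟩, by
        obtain ⟨a, ha, h⟩ := Finset.mem_map.mp u.2
        have : a = ⟨u.1, by exact h ▸ a.2⟩ := Subtype.ext h
        exact this ▸ ha⟩
    left_inv := fun u => Subtype.ext (Subtype.ext rfl)
    right_inv := fun u => Subtype.ext rfl }

lemma psub_psub_det (M : Matrix V V K) (Z : Finset V) (s : Finset {v // v ∈ Z}) :
    (psub (psub M Z) s).det =
      (psub M (s.map (Function.Embedding.subtype (· ∈ Z)))).det := by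
  have h : psub (psub M Z) s =
      (psub M (s.map (Function.Embedding.subtype (· ∈ Z)))).submatrix
        (subEquiv Z s) (subEquiv Z s) := by
    ext a b; rfl
  rw [h, det_submatrix_equiv_self]

lemma det_psub_add_one (M : Matrix V V K) (Z : Finset V) :
    (psub (M + 1) Z).det = ∑ W ∈ Z.powerset, (psub M W).det := by
  rw [psub_add_one, det_add_one]
  rw [show (∑ s : Finset {v // v ∈ Z}, (psub (psub M Z) s).det)
      = ∑ s : Finset {v // v ∈ Z}, (psub M (s.map (Function.Embedding.subtype (· ∈ Z)))).det from
    Finset.sum_congr rfl fun s _ => psub_psub_det M Z s]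
  refine Finset.sum_nbij' (i := fun s => s.map (Function.Embedding.subtype (· ∈ Z)))
    (j := fun W => W.subtype (· ∈ Z)) ?_ ?_ ?_ ?_ ?_
  · intro s _
    simp only [Finset.mem_powerset]
    intro v hv
    obtain ⟨a, _, h⟩ := Finset.mem_map.mp hv
    exact h ▸ a.2
  · intro W _; exact Finset.mem_univ _
  · intro s _
    ext u
    simp only [Finset.mem_subtype, Finset.mem_map, Function.Embedding.coe_subtype]
    exact ⟨fun ⟨a, ha, h⟩ => Subtype.ext h ▸ ha, fun h => ⟨u, h, rfl⟩⟩
  · intro W hW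
    simp only [Finset.subtype_map]
    exact Finset.filter_true_of_mem fun v hv => Finset.mem_powerset.mp hW hv
  · intro s _; rfl

lemma set_eq_iff (U X Z : Finset V) : U \ X = Z \ (U ∩ X) ↔ Z ⊆ U ∧ U ⊆ Z ∪ X := by
  simp only [Finset.ext_iff, Finset.subset_iff, Finset.mem_sdiff, Finset.mem_inter,
    Finset.mem_union]
  constructor
  · intro h
    constructor
    · intro a ha
      by_contra hU
      have := (h a).mpr ⟨ha, fun hc => hU hc.1⟩
      exact hU this.1
    · intro a ha
      by_cases hx : a ∈ X
      · exact Or.inr hx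
      · exact Or.inl ((h a).mp ⟨ha, hx⟩).1
  · rintro ⟨h1, h2⟩ a
    constructor
    · rintro ⟨hU, hX⟩
      exact ⟨(h2 hU).resolve_right hX, fun hc => hX hc.2⟩
    · rintro ⟨hZ, hc⟩
      have hU := h1 hZ
      exact ⟨hU, fun hx => hc ⟨hU, hx⟩⟩

lemma filter_eq_Icc (U X Z : Finset V) :
    Z.powerset.filter (fun W => U ∈ (X ∆ W).powerset) = Finset.Icc (U \ X) (Z \ (U ∩ X)) := by
  ext W
  simp only [Finset.mem_filter, Finset.mem_powerset, Finset.mem_Icc, Finset.le_eq_subset,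
    Finset.subset_iff, Finset.mem_symmDiff, Finset.mem_sdiff, Finset.mem_inter]
  constructor
  · rintro ⟨hWZ, hUXW⟩
    constructor
    · rintro a ⟨haU, haX⟩
      rcases hUXW haU with h | h
      · exact absurd h.1 haX
      · exact h.1
    · intro a haW
      refine ⟨hWZ haW, fun hc => ?_⟩
      rcases hUXW hc.1 with h | h
      · exact h.2 haW
      · exact h.2 hc.2
  · rintro ⟨h1, h2⟩
    constructor
    · intro a haW
      exact (h2 haW).1
    · intro a haU
      by_cases hx : a ∈ X
      · exact Or.inl ⟨hx, fun hw => (h2 hw).2 ⟨haU, hx⟩⟩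
      · exact Or.inr ⟨h1 ⟨haU, hx⟩, hx⟩

lemma card_filter_parity (U X Z : Finset V) :
    (((Z.powerset.filter (fun W => U ∈ (X ∆ W).powerset)).card : ZMod 2))
      = if Z ⊆ U ∧ U ⊆ Z ∪ X then 1 else 0 := by
  rw [filter_eq_Icc]
  by_cases hsub : U \ X ⊆ Z \ (U ∩ X)
  · rw [Finset.card_Icc_finset hsub]
    by_cases heq : Z ⊆ U ∧ U ⊆ Z ∪ X
    · have he : U \ X = Z \ (U ∩ X) := (set_eq_iff U X Z).mpr heq
      rw [if_pos heq, ← he, Nat.sub_self, pow_zero, Nat.cast_one]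
    · rw [if_neg heq]
      have hne : (Z \ (U ∩ X)).card ≠ (U \ X).card := by
        intro hc
        exact heq ((set_eq_iff U X Z).mp
          (Finset.eq_of_subset_of_card_le hsub (le_of_eq hc)))
      have hlt : (U \ X).card < (Z \ (U ∩ X)).card :=
        lt_of_le_of_ne (Finset.card_le_card hsub) (Ne.symm hne)
      obtain ⟨k, hk⟩ : ∃ k, (Z \ (U ∩ X)).card - (U \ X).card = k + 1 :=
        ⟨_, (Nat.succ_pred_eq_of_pos (Nat.sub_pos_of_lt hlt)).symm⟩
      rw [hk, pow_succ, Nat.cast_mul, show ((2 : ℕ) : ZMod 2) = 0 by decide, mul_zero]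
  · rw [Finset.Icc_eq_empty hsub, Finset.card_empty, Nat.cast_zero, if_neg]
    intro hc
    exact hsub (((set_eq_iff U X Z).mpr hc) ▸ Finset.Subset.refl _)

lemma zeta2 (f : Finset V → ZMod 2) (X Z : Finset V) :
    (∑ W ∈ Z.powerset, ∑ U ∈ (X ∆ W).powerset, f U)
      = ∑ T ∈ Finset.Icc Z (Z ∪ X), f T := by
  have h1 : ∀ W : Finset V, (∑ U ∈ (X ∆ W).powerset, f U)
      = ∑ U ∈ (Finset.univ : Finset V).powerset,
          if U ∈ (X ∆ W).powerset then f U else 0 := by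
    intro W
    rw [Finset.sum_ite_mem, Finset.inter_eq_right.mpr
      (fun u _ => Finset.mem_powerset.mpr (Finset.subset_univ u))]
  rw [Finset.sum_congr rfl fun W _ => h1 W, Finset.sum_comm]
  have h2 : ∀ U : Finset V, (∑ W ∈ Z.powerset, if U ∈ (X ∆ W).powerset then f U else 0)
      = if Z ⊆ U ∧ U ⊆ Z ∪ X then f U else 0 := by
    intro U
    rw [← Finset.sum_filter, Finset.sum_const, nsmul_eq_mul, card_filter_parity, boole_mul]
  rw [Finset.sum_congr rfl fun U _ => h2 U]
  have h3 : ∀ U : Finset V, (if Z ⊆ U ∧ U ⊆ Z ∪ X then f U else 0)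
      = if U ∈ Finset.Icc Z (Z ∪ X) then f U else 0 := by
    intro U
    refine if_congr ?_ rfl rfl
    rw [Finset.mem_Icc]
  rw [Finset.sum_congr rfl fun U _ => h3 U, Finset.sum_ite_mem, Finset.inter_eq_right.mpr
    (fun u _ => Finset.mem_powerset.mpr (Finset.subset_univ u))]

lemma max_transfer (X : Finset V) (f h : Finset V → ZMod 2)
    (hrel : ∀ Z, h Z = ∑ T ∈ Finset.Icc Z (Z ∪ X), f T) (Y : Finset V) :
    (f Y = 1 ∧ ∀ Z, Y ⊂ Z → f Z ≠ 1) ↔ (h Y = 1 ∧ ∀ Z, Y ⊂ Z → h Z ≠ 1) := by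
  have hzm : ∀ x : ZMod 2, x ≠ 1 ↔ x = 0 := by decide
  have hsingle : ∀ Y' : Finset V, (∀ Z, Y' ⊂ Z → f Z = 0) → h Y' = f Y' := by
    intro Y' hP
    rw [hrel]
    refine Finset.sum_eq_single_of_mem Y'
      (Finset.mem_Icc.mpr ⟨le_refl _, Finset.subset_union_left⟩) ?_
    intro T hT hne
    exact hP T (lt_of_le_of_ne (Finset.mem_Icc.mp hT).1 (Ne.symm hne))
  constructor
  · rintro ⟨hf1, hmax⟩
    have hP : ∀ Z, Y ⊂ Z → f Z = 0 := fun Z hZ => (hzm _).mp (hmax Z hZ)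
    refine ⟨(hsingle Y hP).trans hf1, fun Z hZ => ?_⟩
    rw [hzm, hrel]
    refine Finset.sum_eq_zero fun T hT => ?_
    exact hP T (lt_of_lt_of_le hZ (Finset.mem_Icc.mp hT).1)
  · rintro ⟨hh1, hmax⟩
    have hPh : ∀ Z, Y ⊂ Z → h Z = 0 := fun Z hZ => (hzm _).mp (hmax Z hZ)
    have hPf : ∀ Z, Y ⊂ Z → f Z = 0 := by
      by_contra hc
      push_neg at hc
      obtain ⟨Z0, hZ0, hfZ0⟩ := hc
      set S := Finset.univ.powerset.filter (fun W => Y ⊂ W ∧ f W ≠ 0) with hS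
      have hne : S.Nonempty :=
        ⟨Z0, by simp [hS, Finset.mem_filter, hZ0, hfZ0]⟩
      obtain ⟨W, hWS, hWmax⟩ := Finset.exists_max_image S Finset.card hne
      rw [hS, Finset.mem_filter] at hWS
      have hPW : ∀ T, W ⊂ T → f T = 0 := by
        intro T hT
        by_contra hfT
        have hTS : T ∈ S := by
          rw [hS, Finset.mem_filter]
          exact ⟨Finset.mem_powerset.mpr (Finset.subset_univ T),
            hWS.2.1.trans hT, hfT⟩
        exact absurd (hWmax T hTS) (not_le.mpr (Finset.card_lt_card hT))
      have : h W = 0 := hPh W hWS.2.1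
      rw [hsingle W hPW] at this
      exact hWS.2.2 this
    exact ⟨(hsingle Y hPf).symm.trans hh1, fun Z hZ => (hzm _).mpr (hPf Z hZ)⟩

theorem stmt15 (G : Matrix V V (ZMod 2)) (hG : G.IsSymm) (X : Finset V)
    (hX : (psub (G + 1) X).det = 1) :
    ∀ Y : Finset V,
      ((psub G Y).det = 1 ∧ ∀ Z : Finset V, Y ⊂ Z → (psub G Z).det ≠ 1) ↔
      ((psub (dualPivot G X) Y).det = 1 ∧
        ∀ Z : Finset V, Y ⊂ Z → (psub (dualPivot G X) Z).det ≠ 1) := by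
  intro Y
  have hkey : ∀ Z : Finset V, (psub (dualPivot G X) Z).det
      = ∑ T ∈ Finset.Icc Z (Z ∪ X), (psub G T).det := by
    intro Z
    rw [dualPivot, det_psub_add_one,
      Finset.sum_congr rfl fun W _ => tucker (G + 1) X W hX,
      Finset.sum_congr rfl fun W _ => det_psub_add_one G (X ∆ W)]
    exact zeta2 (fun T => (psub G T).det) X Z
  exact (max_transfer X (fun T => (psub G T).det) (fun T => (psub (dualPivot G X) T).det)
    hkey Y)
end

section
/- Let G be a symmetric V×V matrix over F2 and X a maximal element of {Y ⊆ V : det G[Y] = 1}. Then the contraction G *\ X (the Schur complement of G[X] in G) is the zero matrix on V \ X. -/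
open Matrix

variable {V : Type*} [Fintype V] [DecidableEq V] {K : Type*} [Field K]

/-- Contraction of `A` on `X`: the pivot on `X` restricted to the complement of `X`. -/
noncomputable def contraction (A : Matrix V V K) (X : Finset V) :
    Matrix {v // v ∉ X} {v // v ∉ X} K :=
  (pivot A X).submatrix Subtype.val Subtype.val

lemma contraction_eq (A : Matrix V V K) (X : Finset V) :
    contraction A X = A.submatrix (Subtype.val : {v // v ∉ X} → V) (Subtype.val : {v // v ∉ X} → V) -
      A.submatrix (Subtype.val : {v // v ∉ X} → V) (Subtype.val : {v // v ∈ X} → V) * (psub A X)⁻¹ *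
        A.submatrix (Subtype.val : {v // v ∈ X} → V) (Subtype.val : {v // v ∉ X} → V) := by
  ext i j
  simp [contraction, pivot, psub, Equiv.sumCompl_symm_apply_of_neg i.2,
    Equiv.sumCompl_symm_apply_of_neg j.2]

lemma contraction_isSymm (A : Matrix V V K) (X : Finset V) (hA : A.IsSymm) :
    (contraction A X).IsSymm := by
  have hA' : Aᵀ = A := hA
  have hP : (psub A X)ᵀ = psub A X := by
    rw [psub, transpose_submatrix, hA']
  rw [Matrix.IsSymm, contraction_eq, transpose_sub, transpose_submatrix, hA',
    Matrix.transpose_mul, Matrix.transpose_mul, transpose_nonsing_inv, hP,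
    transpose_submatrix, transpose_submatrix, hA', Matrix.mul_assoc]

def unionEquiv (X S : Finset V) (hd : Disjoint X S) :
    {v // v ∈ X ∪ S} ≃ {v // v ∈ X} ⊕ {v // v ∈ S} where
  toFun x := if h : x.1 ∈ X then .inl ⟨x.1, h⟩
    else .inr ⟨x.1, (Finset.mem_union.mp x.2).resolve_left h⟩
  invFun := Sum.elim (fun a => ⟨a.1, Finset.mem_union_left _ a.2⟩)
    (fun a => ⟨a.1, Finset.mem_union_right _ a.2⟩)
  left_inv x := by by_cases h : x.1 ∈ X <;> simp [h]
  right_inv x := by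
    rcases x with a | a
    · simp [a.2]
    · have : a.1 ∉ X := Finset.disjoint_right.mp hd a.2
      simp [this]

lemma psub_union_eq (A : Matrix V V K) (X S : Finset V) (hd : Disjoint X S) :
    psub A (X ∪ S) = (Matrix.fromBlocks (psub A X)
        (A.submatrix (Subtype.val : {v // v ∈ X} → V) (Subtype.val : {v // v ∈ S} → V))
        (A.submatrix (Subtype.val : {v // v ∈ S} → V) (Subtype.val : {v // v ∈ X} → V))
        (psub A S)).submatrix (unionEquiv X S hd) (unionEquiv X S hd) := by
  ext i j
  by_cases hi : i.1 ∈ X <;> by_cases hj : j.1 ∈ X <;>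
    simp [psub, unionEquiv, hi, hj]

def inc {X S : Finset V} (hd : Disjoint X S) (s : {v // v ∈ S}) : {v // v ∉ X} :=
  ⟨s.1, Finset.disjoint_right.mp hd s.2⟩

lemma det_psub_union (A : Matrix V V K) (X S : Finset V) (hd : Disjoint X S)
    (hP : IsUnit (psub A X).det) :
    (psub A (X ∪ S)).det = (psub A X).det *
      ((contraction A X).submatrix (inc hd) (inc hd)).det := by
  haveI := (psub A X).invertibleOfIsUnitDet hP
  rw [psub_union_eq A X S hd, det_submatrix_equiv_self, det_fromBlocks₁₁]
  congr 1
  congr 1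
  rw [invOf_eq_nonsing_inv]
  ext i j
  simp [contraction_eq, psub, Matrix.sub_apply, Matrix.mul_apply, inc]

def pairEquiv (e f : V) (hef : e ≠ f) : {v // v ∈ ({e, f} : Finset V)} ≃ Fin 2 where
  toFun x := if x.1 = e then 0 else 1
  invFun k := if k = 0 then ⟨e, by simp⟩ else ⟨f, by simp⟩
  left_inv x := by
    rcases Finset.mem_insert.mp x.2 with h | h
    · simp only [h, if_pos]
      exact Subtype.ext h.symm
    · have h' := Finset.mem_singleton.mp h
      simp only [h', if_neg hef.symm, if_neg (by decide : (1 : Fin 2) ≠ 0)]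
      exact Subtype.ext h'.symm
  right_inv k := by
    fin_cases k
    · simp
    · simp [hef.symm]

lemma zmod2_ne_one : ∀ x : ZMod 2, x ≠ 1 → x = 0 := by decide

theorem stmt19 (G : Matrix V V (ZMod 2)) (hG : G.IsSymm) (X : Finset V)
    (hX : (psub G X).det = 1)
    (hmax : ∀ Y : Finset V, X ⊂ Y → (psub G Y).det ≠ 1) :
    contraction G X = 0 := by
  have hunit : IsUnit (psub G X).det := by rw [hX]; exact isUnit_one
  have hsym := contraction_isSymm G X hG
  have hdet0 : ∀ S : Finset V, Disjoint X S → S.Nonempty → (psub G (X ∪ S)).det = 0 := by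
    intro S hd hne
    refine zmod2_ne_one _ (hmax _ ?_)
    rw [Finset.ssubset_iff_of_subset Finset.subset_union_left]
    obtain ⟨a, ha⟩ := hne
    exact ⟨a, Finset.mem_union_right _ ha, Finset.disjoint_right.mp hd ha⟩
  have hdiag : ∀ i : {v // v ∉ X}, contraction G X i i = 0 := by
    intro i
    have hd : Disjoint X {i.1} := Finset.disjoint_singleton_right.mpr i.2
    have h1 := det_psub_union G X {i.1} hd hunit
    haveI : Unique {v // v ∈ ({i.1} : Finset V)} :=
      ⟨⟨⟨i.1, Finset.mem_singleton_self _⟩⟩, by rintro ⟨x, hx⟩; ext; simpa using hx⟩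
    rw [hdet0 _ hd (Finset.singleton_nonempty _), hX, one_mul, Matrix.det_unique] at h1
    have key : ∀ s : {v // v ∈ ({i.1} : Finset V)}, inc hd s = i :=
      fun s => Subtype.ext (Finset.mem_singleton.mp s.2)
    rw [Matrix.submatrix_apply, key] at h1
    exact h1.symm
  ext i j
  by_cases hij : i = j
  · subst hij; simpa using hdiag i
  · have hef : i.1 ≠ j.1 := fun h => hij (Subtype.ext h)
    have hd : Disjoint X {i.1, j.1} := by
      rw [Finset.disjoint_insert_right, Finset.disjoint_singleton_right]
      exact ⟨i.2, j.2⟩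
    have h1 := det_psub_union G X {i.1, j.1} hd hunit
    rw [hdet0 _ hd ⟨i.1, by simp⟩, hX, one_mul] at h1
    set M := (contraction G X).submatrix (inc hd) (inc hd) with hM
    have h2 : M.det = (M.submatrix (pairEquiv i.1 j.1 hef).symm
        (pairEquiv i.1 j.1 hef).symm).det := (det_submatrix_equiv_self _ _).symm
    rw [h2, Matrix.det_fin_two] at h1
    have he0 : (pairEquiv i.1 j.1 hef).symm 0 = ⟨i.1, by simp⟩ := rfl
    have he1 : (pairEquiv i.1 j.1 hef).symm 1 = ⟨j.1, by simp⟩ := rfl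
    simp only [Matrix.submatrix_apply, he0, he1, hM] at h1
    have hii : inc hd (⟨i.1, by simp⟩ : {v // v ∈ ({i.1, j.1} : Finset V)}) = i :=
      Subtype.ext rfl
    have hjj : inc hd (⟨j.1, by simp⟩ : {v // v ∈ ({i.1, j.1} : Finset V)}) = j :=
      Subtype.ext rfl
    rw [hii, hjj, hdiag i, hdiag j, zero_mul, zero_sub] at h1
    have hsy : contraction G X j i = contraction G X i j :=
      congrFun (congrFun hsym i) j
    rw [hsy] at h1
    have : ∀ x : ZMod 2, (0 : ZMod 2) = -(x * x) → x = 0 := by decide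
    simpa using this _ h1
end
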